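/- (Dirac resolvent factorization estimate) Let z ∈ ρ(𝒟₀) and suppose the Schrödinger resolvent bounds ‖R_{−Δ}(w)‖_{X→X*} ≤ C |w|^{−1/2} and ‖∂_k R_{−Δ}(w)‖_{X→X*} ≤ C hold for all w ∈ ℂ \ [0, ∞) and k ∈ {1,…,n}, with w = z² − m². Then, using R_{𝒟₀}(z) = (𝒟₀ + z) R_{−Δ}(z² − m²) and |z ± m| = |z² − m²|^{1/2} |(z±m)/(z∓m)|^{1/2}, the Dirac resolvent satisfies ‖R_{𝒟₀}(z)‖_{X→X*} ≤ C [ n + max(|z+m|, |z−m|) · |z²−m²|^{−1/2} ] = C [ n + |(z+m)/(z−m)|^{sgn(Re z)/2} ]. -/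

import Mathlib

open scoped BigOperators

/-- Dirac resolvent factorization estimate: if the components
`∂_k R_{−Δ}(z²−m²)` and `R_{−Δ}(z²−m²)` satisfy the uniform bounds `‖·‖ ≤ C`
and `‖·‖ ≤ C|z²−m²|^{−1/2}` respectively, and the Dirac resolvent
`R_{𝒟₀}(z) = (𝒟₀ + z) R_{−Δ}(z²−m²)` obeys the pointwise bound coming from the
unitarity of the Clifford matrices, then
`‖R_{𝒟₀}(z)‖_{X→X*} ≤ C[n + max(|z+m|,|z−m|)·|z²−m²|^{−1/2}]`, and for
`Re z ≠ 0` the factor equals `|(z+m)/(z−m)|^{sgn(Re z)/2}`. -/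

private lemma dirac_aux_fact {a b : ℝ} (ha : 0 < a) (hb : 0 < b) :
    a * (a * b) ^ (-(1 / 2) : ℝ) = (a / b) ^ ((1 : ℝ) / 2) := by
  have h2 : a ^ ((1:ℝ)/2) * a ^ ((1:ℝ)/2) = a := by
    rw [← Real.rpow_add ha]; norm_num
  have ha2 : (0:ℝ) < a ^ ((1:ℝ)/2) := Real.rpow_pos_of_pos ha _
  have hb2 : (0:ℝ) < b ^ ((1:ℝ)/2) := Real.rpow_pos_of_pos hb _
  rw [Real.rpow_neg (by positivity), Real.mul_rpow ha.le hb.le,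
    Real.div_rpow ha.le hb.le]
  field_simp
  nlinarith [h2]

theorem dirac_resolvent_estimate
    {X Xs : Type*} [NormedAddCommGroup X] [NormedSpace ℂ X]
    [NormedAddCommGroup Xs] [NormedSpace ℂ Xs]
    (n : ℕ) (hn : 2 ≤ n) (m C : ℝ) (hm : 0 ≤ m) (hC : 0 ≤ C)
    (z : ℂ) (hz : ¬(z.im = 0 ∧ m ≤ |z.re|))
    (Dk : Fin n → X →L[ℂ] Xs) (hDk : ∀ k, ‖Dk k‖ ≤ C)
    (R0 : X →L[ℂ] Xs)
    (hR0 : ‖R0‖ ≤ C * ‖z ^ 2 - (m : ℂ) ^ 2‖ ^ (-(1 / 2) : ℝ))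
    (RD : X →L[ℂ] Xs)
    (hRD : ∀ f : X, ‖RD f‖ ≤ (∑ k : Fin n, ‖Dk k f‖) +
      max (‖z + (m : ℂ)‖) (‖z - (m : ℂ)‖) * ‖R0 f‖) :
    ‖RD‖ ≤ C * ((n : ℝ) +
      max (‖z + (m : ℂ)‖) (‖z - (m : ℂ)‖) *
        ‖z ^ 2 - (m : ℂ) ^ 2‖ ^ (-(1 / 2) : ℝ)) ∧
    (z.re ≠ 0 →
      max (‖z + (m : ℂ)‖) (‖z - (m : ℂ)‖) *
          ‖z ^ 2 - (m : ℂ) ^ 2‖ ^ (-(1 / 2) : ℝ)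
        = ‖(z + (m : ℂ)) / (z - (m : ℂ))‖ ^ (Real.sign z.re / 2)) := by

  have hzp : z + (m : ℂ) ≠ 0 := by
    intro h
    apply hz
    have hze : z = -(m : ℂ) := by linear_combination h
    rw [hze]
    simp [abs_of_nonneg hm, abs_neg]
  have hzm : z - (m : ℂ) ≠ 0 := by
    intro h
    apply hz
    have hze : z = (m : ℂ) := by linear_combination h
    rw [hze]
    simp [abs_of_nonneg hm]
  set a := ‖z + (m : ℂ)‖ with ha_def
  set b := ‖z - (m : ℂ)‖ with hb_def
  have ha : 0 < a := norm_pos_iff.mpr hzp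
  have hb : 0 < b := norm_pos_iff.mpr hzm
  have hprod : ‖z ^ 2 - (m : ℂ) ^ 2‖ = a * b := by
    rw [ha_def, hb_def, ← norm_mul]
    ring_nf
  constructor
  · refine ContinuousLinearMap.opNorm_le_bound _ (by positivity) (fun f => ?_)
    have h1 : (∑ k : Fin n, ‖Dk k f‖) ≤ (n : ℝ) * (C * ‖f‖) := by
      calc (∑ k : Fin n, ‖Dk k f‖) ≤ ∑ k : Fin n, C * ‖f‖ :=
            Finset.sum_le_sum (fun k _ =>
              le_trans ((Dk k).le_opNorm f) (by
                have := hDk k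
                have h0 : (0:ℝ) ≤ ‖f‖ := norm_nonneg f
                nlinarith [ (Dk k).opNorm_nonneg ]))
        _ = (n : ℝ) * (C * ‖f‖) := by simp [Finset.sum_const, mul_assoc]
    have h2 : ‖R0 f‖ ≤ C * ‖z ^ 2 - (m : ℂ) ^ 2‖ ^ (-(1 / 2) : ℝ) * ‖f‖ :=
      le_trans (R0.le_opNorm f) (by
        have h0 : (0:ℝ) ≤ ‖f‖ := norm_nonneg f
        nlinarith [R0.opNorm_nonneg])
    have h3 := hRD f
    have hmax : 0 ≤ max a b := le_trans ha.le (le_max_left _ _)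
    calc ‖RD f‖ ≤ (∑ k : Fin n, ‖Dk k f‖) + max a b * ‖R0 f‖ := h3
      _ ≤ (n : ℝ) * (C * ‖f‖) +
          max a b * (C * ‖z ^ 2 - (m : ℂ) ^ 2‖ ^ (-(1 / 2) : ℝ) * ‖f‖) := by
          gcongr
      _ = C * ((n : ℝ) + max a b * ‖z ^ 2 - (m : ℂ) ^ 2‖ ^ (-(1 / 2) : ℝ)) * ‖f‖ := by
          ring
  · intro hre
    rw [hprod, norm_div]
    rcases lt_or_gt_of_ne hre with hlt | hgt
    · have hsign : Real.sign z.re = -1 := Real.sign_of_neg hlt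
      have hab : a ≤ b := by
        have : a ^ 2 ≤ b ^ 2 := by
          rw [ha_def, hb_def, Complex.sq_norm, Complex.sq_norm]
          simp [Complex.normSq_apply, Complex.add_re, Complex.sub_re, Complex.add_im,
            Complex.sub_im, Complex.ofReal_re, Complex.ofReal_im]
          nlinarith
        nlinarith
      rw [max_eq_right hab, hsign, mul_comm a b, dirac_aux_fact hb ha]
      rw [show (-1 : ℝ) / 2 = -(1/2) by norm_num,
        Real.rpow_neg (by positivity), ← Real.inv_rpow (by positivity), inv_div]
    · have hsign : Real.sign z.re = 1 := Real.sign_of_pos hgt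
      have hab : b ≤ a := by
        have : b ^ 2 ≤ a ^ 2 := by
          rw [ha_def, hb_def, Complex.sq_norm, Complex.sq_norm]
          simp [Complex.normSq_apply, Complex.add_re, Complex.sub_re, Complex.add_im,
            Complex.sub_im, Complex.ofReal_re, Complex.ofReal_im]
          nlinarith
        nlinarith
      rw [max_eq_left hab, hsign, dirac_aux_fact ha hb]
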